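/- arXiv:1803.08751 — 3 statements merged into one kernel-verified Lean document; each statement's English description precedes it below -/
import Mathlib

section
/- Theorem A (the generalized restricted sum formula with s = 0, for all indices k and all t) implies Theorem B (the version with an extra tail {1}^s, for all indices k and all s, t). Concretely, defining F(k,s,t) := G(k,s,t) − H(k,s,t) as the difference of the two sides of the s-version, one has the recursions F((k,1),s,t) = ∑_{u=0}^{t} F(k, s+t−u+1, u), hence F(k,s+1,t) = F((k,1),s,t) − F((k,1),s+1,t−1), and consequently F(k,s+1,t) = ∑_{t'=1}^{t} (−1)^{t'−1} F((k,{1}^{t'}), s, t−t'+1); combined with F(k,s,0)=0 and F(k,0,t)=0 this yields F(k,s,t)=0 for all s,t. -/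
/-- The multiple zeta value ζ(k₁,…,k_r) = ∑_{n₁>⋯>n_r≥1} ∏ nᵢ^{-kᵢ}. -/
noncomputable def mzeta (k : List ℕ) : ℝ :=
  ∑' n : {n : Fin k.length → ℕ // (∀ i j : Fin k.length, i < j → n j < n i) ∧ ∀ i, 1 ≤ n i},
    ∏ i, ((n.1 i : ℝ) ^ k.get i)⁻¹

/-- ζ⁺(k₁,…,k_r) := ζ(k₁+1,k₂,…,k_r). -/
noncomputable def zp : List ℕ → ℝ
  | [] => mzeta []
  | a :: t => mzeta ((a + 1) :: t)

/-- Compositions of `n` into `r` positive parts. -/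
def compFinset (r n : ℕ) : Finset (Fin r → ℕ) :=
  (Finset.Nat.antidiagonalTuple r n).filter (fun m => ∀ i, 1 ≤ m i)

/-- Weak compositions of `n` into `r` non-negative parts. -/
def weakComp (r n : ℕ) : Finset (Fin r → ℕ) := Finset.Nat.antidiagonalTuple r n

/-- The index (k₁,{1}^{m₁},…,k_{r-1},{1}^{m_{r-1}},k_r). -/
def baseIdx (k : List ℕ) (m : Fin (k.length - 1) → ℕ) : List ℕ :=
  (List.ofFn fun i : Fin (k.length - 1) =>
    k.get (Fin.castLE (Nat.sub_le _ _) i) :: List.replicate (m i) 1).flatten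
    ++ [k.getD (k.length - 1) 1]
/-- G(k,s,t): left-hand side of the s-version. -/
noncomputable def Gfun (k : List ℕ) (s t : ℕ) : ℝ :=
  ∑ m ∈ compFinset k.length (k.length + t),
    ∑ a ∈ Fintype.piFinset (fun i => compFinset (m i) (k.get i + m i - 1)),
      zp ((List.ofFn fun i => List.ofFn (a i)).flatten ++ List.replicate s 1)

/-- H(k,s,t): right-hand side of the s-version. -/
noncomputable def Hfun (k : List ℕ) (s t : ℕ) : ℝ :=
  ∑ l ∈ Finset.range (t + 1),
    ∑ m ∈ weakComp (k.length - 1) (t - l),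
      ∑ e ∈ weakComp (baseIdx k m ++ List.replicate s 1).length l,
        zp (List.zipWith (· + ·) (baseIdx k m ++ List.replicate s 1) (List.ofFn e))

/-- F := G − H. -/
noncomputable def Ffun (k : List ℕ) (s t : ℕ) : ℝ := Gfun k s t - Hfun k s t

/-! ### Auxiliary combinatorial lemmas -/

lemma memCompFinset {r n : ℕ} {m : Fin r → ℕ} :
    m ∈ compFinset r n ↔ (∑ i, m i) = n ∧ ∀ i, 1 ≤ m i := by
  simp [compFinset, Finset.Nat.mem_antidiagonalTuple]

lemma memWeakComp {r n : ℕ} {m : Fin r → ℕ} :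
    m ∈ weakComp r n ↔ (∑ i, m i) = n := Finset.Nat.mem_antidiagonalTuple

lemma compFinset_empty {r n : ℕ} (h : n < r) : compFinset r n = ∅ := by
  rw [Finset.eq_empty_iff_forall_notMem]
  intro m hm
  rw [memCompFinset] at hm
  have h1 : (Finset.univ.card : ℕ) • 1 ≤ ∑ i, m i :=
    Finset.card_nsmul_le_sum Finset.univ m 1 (fun i _ => hm.2 i)
  rw [hm.1] at h1
  simp at h1
  omega

lemma compFinset_self (n : ℕ) : compFinset n n = {fun _ => 1} := by
  ext m
  simp only [memCompFinset, Finset.mem_singleton]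
  constructor
  · rintro ⟨hs, hp⟩
    funext i
    by_contra hne
    have hlt : (1:ℕ) < m i := lt_of_le_of_ne (hp i) (Ne.symm hne)
    have h2 : ∑ _j : Fin n, 1 < ∑ j, m j :=
      Finset.sum_lt_sum (fun j _ => hp j) ⟨i, Finset.mem_univ i, hlt⟩
    rw [hs] at h2
    simp at h2
  · rintro rfl
    simp

lemma compFinset_one {n : ℕ} (h : 1 ≤ n) : compFinset 1 n = {fun _ => n} := by
  ext m
  simp only [memCompFinset, Finset.mem_singleton]
  constructor
  · rintro ⟨hs, _⟩
    funext i
    have hi : i = 0 := Subsingleton.elim i 0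
    subst hi
    rw [← hs, Fin.sum_univ_one]
  · rintro rfl
    refine ⟨by simp, fun i => h⟩

lemma weakComp_zero (r : ℕ) : weakComp r 0 = {fun _ => 0} := by
  ext m
  simp [weakComp, Finset.Nat.mem_antidiagonalTuple, Finset.sum_eq_zero_iff, funext_iff]

lemma ofFn_cast_eq {n m : ℕ} (e : m = n) (g : Fin n → ℕ) :
    List.ofFn (fun j : Fin m => g (Fin.cast e j)) = List.ofFn g := by subst e; rfl

lemma sum_cast_eq {n m : ℕ} (e : m = n) (g : Fin n → ℕ) :
    ∑ j : Fin m, g (Fin.cast e j) = ∑ j, g j := by subst e; rfl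

lemma mem_comp_self' {X : ℕ} {c : Fin X → ℕ} (hc : c ∈ compFinset X (1 + X - 1)) :
    c = fun _ => 1 := by
  have h : 1 + X - 1 = X := by omega
  rw [h, compFinset_self] at hc
  simpa using hc

lemma sum_comp_snoc (r N : ℕ) (f : (Fin (r+1) → ℕ) → ℝ) :
    ∑ m ∈ compFinset (r+1) N, f m
      = ∑ v ∈ Finset.Icc 1 N, ∑ m ∈ compFinset r (N - v), f (Fin.snoc m v) := by
  rw [Finset.sum_sigma' (Finset.Icc 1 N) (fun v => compFinset r (N - v))
      (fun v m => f (Fin.snoc m v))]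
  apply Finset.sum_nbij' (i := fun m => (⟨m (Fin.last r), fun i => m i.castSucc⟩ :
      (_ : ℕ) × (Fin r → ℕ))) (j := fun p => Fin.snoc p.2 p.1)
  · intro m hm
    simp only [memCompFinset] at hm
    obtain ⟨hs, hp⟩ := hm
    rw [Fin.sum_univ_castSucc] at hs
    simp only [Finset.mem_sigma, Finset.mem_Icc, memCompFinset]
    exact ⟨⟨hp _, by omega⟩, by omega, fun i => hp _⟩
  · intro p hp
    simp only [Finset.mem_sigma, Finset.mem_Icc, memCompFinset] at hp
    obtain ⟨⟨h1, h2⟩, hs, hpos⟩ := hp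
    simp only [memCompFinset, Fin.sum_univ_castSucc]
    constructor
    · simp only [Fin.snoc_castSucc, Fin.snoc_last]
      omega
    · intro i
      refine Fin.lastCases ?_ ?_ i
      · rw [Fin.snoc_last]; exact h1
      · intro i'; rw [Fin.snoc_castSucc]; exact hpos i'
  · intro m _
    funext i
    refine Fin.lastCases ?_ ?_ i <;> simp
  · intro p _
    rcases p with ⟨v, m⟩
    simp [Fin.snoc_last, Fin.snoc_castSucc]
  · intro m _
    congr 1
    funext i
    refine Fin.lastCases ?_ ?_ i <;> simp

lemma sum_weak_snoc (r N : ℕ) (f : (Fin (r+1) → ℕ) → ℝ) :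
    ∑ m ∈ weakComp (r+1) N, f m
      = ∑ v ∈ Finset.range (N+1), ∑ m ∈ weakComp r (N - v), f (Fin.snoc m v) := by
  rw [Finset.sum_sigma' (Finset.range (N+1)) (fun v => weakComp r (N - v))
      (fun v m => f (Fin.snoc m v))]
  apply Finset.sum_nbij' (i := fun m => (⟨m (Fin.last r), fun i => m i.castSucc⟩ :
      (_ : ℕ) × (Fin r → ℕ))) (j := fun p => Fin.snoc p.2 p.1)
  · intro m hm
    simp only [memWeakComp] at hm
    rw [Fin.sum_univ_castSucc] at hm
    simp only [Finset.mem_sigma, Finset.mem_range, memWeakComp]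
    exact ⟨by omega, by omega⟩
  · intro p hp
    simp only [Finset.mem_sigma, Finset.mem_range, memWeakComp] at hp
    obtain ⟨h1, hs⟩ := hp
    simp only [memWeakComp, Fin.sum_univ_castSucc, Fin.snoc_castSucc, Fin.snoc_last]
    omega
  · intro m _
    funext i
    refine Fin.lastCases ?_ ?_ i <;> simp
  · intro p _
    rcases p with ⟨v, m⟩
    simp [Fin.snoc_last, Fin.snoc_castSucc]
  · intro m _
    congr 1
    funext i
    refine Fin.lastCases ?_ ?_ i <;> simp

lemma sum_piComp_snoc (r : ℕ) (K M : Fin r → ℕ) (v s : ℕ)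
    (W K' : Fin (r+1) → ℕ)
    (hW : ∀ i : Fin r, W i.castSucc = M i) (hWl : W (Fin.last r) = v)
    (hK : ∀ i : Fin r, K' i.castSucc = K i) (hKl : K' (Fin.last r) = 1) :
    ∑ a ∈ Fintype.piFinset (fun i : Fin (r+1) => compFinset (W i) (K' i + W i - 1)),
      zp ((List.ofFn fun i => List.ofFn (a i)).flatten ++ List.replicate s 1)
    = ∑ b ∈ Fintype.piFinset (fun i : Fin r => compFinset (M i) (K i + M i - 1)),
      zp ((List.ofFn fun i => List.ofFn (b i)).flatten ++ List.replicate (v + s) 1) := by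
  have ec : ∀ i : Fin r, M i = W i.castSucc := fun i => (hW i).symm
  apply Finset.sum_nbij'
    (i := fun a => fun (i : Fin r) => fun (j : Fin (M i)) => a i.castSucc (Fin.cast (ec i) j))
    (j := fun b => fun (i : Fin (r+1)) =>
      Fin.lastCases (motive := fun i => Fin (W i) → ℕ) (fun _ => 1)
        (fun i' jj => b i' (Fin.cast (ec i').symm jj)) i)
  · intro a ha
    simp only [Fintype.mem_piFinset] at ha ⊢
    intro i0
    have h := ha i0.castSucc
    simp only [memCompFinset] at h ⊢
    obtain ⟨h1, h2⟩ := h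
    refine ⟨?_, fun j => h2 _⟩
    rw [sum_cast_eq (ec i0) (a i0.castSucc), h1, hW, hK]
  · intro b hb
    simp only [Fintype.mem_piFinset] at hb ⊢
    intro i0
    refine Fin.lastCases ?_ ?_ i0
    · simp only [memCompFinset]
      rw [Fin.lastCases_last]
      refine ⟨?_, fun j => le_refl 1⟩
      simp only [Finset.sum_const, Finset.card_univ, Fintype.card_fin, smul_eq_mul, mul_one,
        hKl]
      omega
    · intro i'
      have h := hb i'
      simp only [memCompFinset] at h ⊢
      rw [Fin.lastCases_castSucc]
      obtain ⟨h1, h2⟩ := h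
      refine ⟨?_, fun jj => h2 _⟩
      rw [sum_cast_eq (ec i').symm (b i'), h1, hW, hK]
  · intro a ha
    simp only [Fintype.mem_piFinset] at ha
    funext i0
    refine Fin.lastCases ?_ ?_ i0
    · rw [Fin.lastCases_last]
      have h := ha (Fin.last r)
      rw [hKl] at h
      exact (mem_comp_self' h).symm
    · intro i'
      rw [Fin.lastCases_castSucc]
      funext jj
      show a i'.castSucc (Fin.cast (ec i') (Fin.cast (ec i').symm jj)) = a i'.castSucc jj
      exact congrArg (a i'.castSucc) (Fin.ext rfl)
  · intro b _
    funext i0 jj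
    show (Fin.lastCases (motive := fun i => Fin (W i) → ℕ) (fun _ => 1)
        (fun i' jj => b i' (Fin.cast (ec i').symm jj)) i0.castSucc) (Fin.cast (ec i0) jj) = b i0 jj
    rw [Fin.lastCases_castSucc]
    exact congrArg (b i0) (Fin.ext rfl)
  · intro a ha
    simp only [Fintype.mem_piFinset] at ha
    have hlast : a (Fin.last r) = fun _ => 1 := by
      have h := ha (Fin.last r)
      rw [hKl] at h
      exact mem_comp_self' h
    congr 1
    rw [List.ofFn_succ']
    rw [hlast]
    simp only [List.concat_eq_append, List.flatten_append, List.flatten_cons,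
      List.flatten_nil, List.append_nil, List.ofFn_const, hWl, List.append_assoc]
    rw [← List.replicate_add]
    congr 2
    exact congrArg List.ofFn (funext fun i0 => (ofFn_cast_eq (ec i0) (a i0.castSucc)).symm)

/-! ### Abstract versions of G and H -/

noncomputable def G2 (r : ℕ) (K : Fin r → ℕ) (s t : ℕ) : ℝ :=
  ∑ m ∈ compFinset r (r + t),
    ∑ a ∈ Fintype.piFinset (fun i => compFinset (m i) (K i + m i - 1)),
      zp ((List.ofFn fun i => List.ofFn (a i)).flatten ++ List.replicate s 1)

lemma Gfun_eq_G2 (k : List ℕ) (s t : ℕ) : Gfun k s t = G2 k.length k.get s t := rfl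

lemma G2_congr {r r' : ℕ} (h : r = r') {K : Fin r → ℕ} {K' : Fin r' → ℕ}
    (hK : ∀ i : Fin r, K i = K' (Fin.cast h i)) (s t : ℕ) :
    G2 r K s t = G2 r' K' s t := by
  subst h
  have hKK : K = K' := funext fun i => hK i
  rw [hKK]

lemma G2_rec (r : ℕ) (K : Fin r → ℕ) (s t : ℕ) :
    G2 (r+1) (Fin.snoc K 1) s t = ∑ u ∈ Finset.range (t+1), G2 r K (s + (t - u) + 1) u := by
  have hsub : Finset.Icc 1 (t+1) ⊆ Finset.Icc 1 (r+1+t) := by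
    intro v hv; simp only [Finset.mem_Icc] at *; omega
  unfold G2
  refine Eq.trans (sum_comp_snoc r (r+1+t) _) (Eq.trans ((Finset.sum_subset hsub ?_).symm) ?_)
  · intro v hv hnv
    have he : compFinset r (r+1+t-v) = ∅ := by
      apply compFinset_empty
      simp only [Finset.mem_Icc] at hv hnv
      omega
    rw [he, Finset.sum_empty]
  · apply Finset.sum_nbij' (i := fun v => t+1-v) (j := fun u => t+1-u)
    · intro v hv; simp only [Finset.mem_Icc, Finset.mem_range] at *; omega
    · intro u hu; simp only [Finset.mem_Icc, Finset.mem_range] at *; omega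
    · intro v hv; simp only [Finset.mem_Icc] at hv; omega
    · intro u hu; simp only [Finset.mem_range] at hu; omega
    · intro v hv
      simp only [Finset.mem_Icc] at hv
      rw [show r+1+t-v = r + (t+1-v) by omega]
      refine Finset.sum_congr rfl (fun m _ => ?_)
      rw [show s + (t - (t+1-v)) + 1 = v + s by omega]
      exact sum_piComp_snoc r K m v s (Fin.snoc m v) (Fin.snoc K 1)
        (fun i => by simp) (by simp) (fun i => by simp) (by simp)

def base2 {r : ℕ} (K : Fin (r+1) → ℕ) (m : Fin r → ℕ) : List ℕ :=
  (List.ofFn fun i : Fin r => K i.castSucc :: List.replicate (m i) 1).flatten ++ [K (Fin.last r)]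

noncomputable def S2 (w : List ℕ) (l : ℕ) : ℝ :=
  ∑ e ∈ weakComp w.length l, zp (List.zipWith (· + ·) w (List.ofFn e))

noncomputable def H2 (r : ℕ) (K : Fin (r+1) → ℕ) (s t : ℕ) : ℝ :=
  ∑ l ∈ Finset.range (t+1), ∑ m ∈ weakComp r (t - l), S2 (base2 K m ++ List.replicate s 1) l

lemma H2_congr {r r' : ℕ} (h : r = r') {K : Fin (r+1) → ℕ} {K' : Fin (r'+1) → ℕ}
    (hK : ∀ i : Fin (r+1), K i = K' (Fin.cast (by rw [h]) i)) (s t : ℕ) :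
    H2 r K s t = H2 r' K' s t := by
  subst h
  have hKK : K = K' := funext fun i => hK i
  rw [hKK]

lemma base2_snoc (r : ℕ) (K : Fin (r+1) → ℕ) (m : Fin r → ℕ) (v c : ℕ) :
    base2 (Fin.snoc K 1) (Fin.snoc m v) ++ List.replicate c 1
      = base2 K m ++ List.replicate (v + 1 + c) 1 := by
  unfold base2
  rw [List.ofFn_succ']
  simp only [Fin.snoc_castSucc, Fin.snoc_last, List.concat_eq_append, List.flatten_append,
    List.flatten_cons, List.flatten_nil, List.append_nil, List.append_assoc, List.cons_append,
    List.nil_append]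
  simp [List.replicate_add, List.replicate_succ', List.append_assoc]

lemma sum_tri (t : ℕ) (g : ℕ → ℕ → ℝ) :
    ∑ l ∈ Finset.range (t+1), ∑ v ∈ Finset.range (t-l+1), g l v
      = ∑ u ∈ Finset.range (t+1), ∑ l ∈ Finset.range (u+1), g l (t-u) := by
  rw [Finset.sum_sigma' (Finset.range (t+1)) (fun l => Finset.range (t-l+1)) (fun l v => g l v),
      Finset.sum_sigma' (Finset.range (t+1)) (fun u => Finset.range (u+1)) (fun u l => g l (t-u))]
  apply Finset.sum_nbij' (i := fun p : (_ : ℕ) × ℕ => (⟨t - p.2, p.1⟩ : (_ : ℕ) × ℕ))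
    (j := fun q : (_ : ℕ) × ℕ => (⟨q.2, t - q.1⟩ : (_ : ℕ) × ℕ))
  · intro p hp; simp only [Finset.mem_sigma, Finset.mem_range] at *; omega
  · intro q hq; simp only [Finset.mem_sigma, Finset.mem_range] at *; omega
  · intro p hp
    obtain ⟨a, b⟩ := p
    simp only [Finset.mem_sigma, Finset.mem_range] at hp
    show (⟨a, t - (t - b)⟩ : (_ : ℕ) × ℕ) = ⟨a, b⟩
    rw [show t - (t - b) = b by omega]
  · intro q hq
    obtain ⟨a, b⟩ := q
    simp only [Finset.mem_sigma, Finset.mem_range] at hq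
    show (⟨t - (t - a), b⟩ : (_ : ℕ) × ℕ) = ⟨a, b⟩
    rw [show t - (t - a) = a by omega]
  · intro p hp
    simp only [Finset.mem_sigma, Finset.mem_range] at hp
    rw [show t - (t - p.2) = p.2 by omega]

lemma H2_rec (r : ℕ) (K : Fin (r+1) → ℕ) (s t : ℕ) :
    H2 (r+1) (Fin.snoc K 1) s t = ∑ u ∈ Finset.range (t+1), H2 r K (s + (t - u) + 1) u := by
  unfold H2
  have step1 : ∀ l, ∑ m ∈ weakComp (r+1) (t-l), S2 (base2 (Fin.snoc K 1) m ++ List.replicate s 1) l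
      = ∑ v ∈ Finset.range (t-l+1), ∑ m ∈ weakComp r (t-l-v),
          S2 (base2 K m ++ List.replicate (v+1+s) 1) l := by
    intro l
    rw [sum_weak_snoc r (t-l) (fun m => S2 (base2 (Fin.snoc K 1) m ++ List.replicate s 1) l)]
    refine Finset.sum_congr rfl (fun v _ => Finset.sum_congr rfl (fun m _ => ?_))
    rw [base2_snoc]
  rw [Finset.sum_congr rfl (fun l _ => step1 l)]
  rw [sum_tri t (fun l v => ∑ m ∈ weakComp r (t-l-v), S2 (base2 K m ++ List.replicate (v+1+s) 1) l)]
  refine Finset.sum_congr rfl (fun u hu => ?_)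
  simp only [Finset.mem_range] at hu
  refine Finset.sum_congr rfl (fun l hl => ?_)
  simp only [Finset.mem_range] at hl
  rw [show t - l - (t-u) = u - l by omega, show t - u + 1 + s = s + (t-u) + 1 by omega]

/-! ### Bridges between the list versions and abstract versions -/

lemma baseIdx_eq_base2 (k : List ℕ) (hk : k ≠ []) (m : Fin (k.length - 1) → ℕ) :
    baseIdx k m
      = base2 (fun i : Fin (k.length - 1 + 1) =>
          k.get (Fin.cast (Nat.succ_pred_eq_of_pos (List.length_pos_iff.mpr hk)) i)) m := by
  have hpos : 0 < k.length := List.length_pos_iff.mpr hk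
  have hlt : k.length - 1 < k.length := by omega
  unfold baseIdx base2
  congr 1
  refine congrArg (fun x => [x]) ?_
  rw [List.getD_eq_getElem k 1 hlt]
  exact (List.get_eq_getElem (l := k)
    (i := Fin.cast (Nat.succ_pred_eq_of_pos hpos) (Fin.last (k.length - 1)))).symm

lemma Hfun_eq_H2 (k : List ℕ) (hk : k ≠ []) (s t : ℕ) :
    Hfun k s t = H2 (k.length - 1)
      (fun i : Fin (k.length - 1 + 1) =>
        k.get (Fin.cast (Nat.succ_pred_eq_of_pos (List.length_pos_iff.mpr hk)) i)) s t := by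
  unfold Hfun H2 S2
  refine Finset.sum_congr rfl (fun l _ => Finset.sum_congr rfl (fun m _ => ?_))
  rw [baseIdx_eq_base2 k hk m]

/-! ### The t = 0 case -/

lemma piFinset_single {n : ℕ} {δ : Fin n → Type*} [∀ i, DecidableEq (δ i)] (f : ∀ i, δ i) :
    Fintype.piFinset (fun i => ({f i} : Finset (δ i))) = {f} := by
  ext g
  simp [Fintype.mem_piFinset, funext_iff]

lemma flatten_ofFn_singleton {n : ℕ} (g : Fin n → ℕ) :
    (List.ofFn fun i => [g i]).flatten = List.ofFn g := by
  induction n with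
  | zero => simp
  | succ n ih =>
    rw [List.ofFn_succ, List.flatten_cons, ih, List.singleton_append, ← List.ofFn_succ]

lemma zipWith_add_zero (w : List ℕ) :
    List.zipWith (· + ·) w (List.replicate w.length 0) = w := by
  induction w with
  | nil => rfl
  | cons a w ih => simp only [List.length_cons, List.replicate_succ, List.zipWith_cons_cons,
      Nat.add_zero, ih]

lemma S2_zero (w : List ℕ) : S2 w 0 = zp w := by
  unfold S2
  rw [weakComp_zero, Finset.sum_singleton, List.ofFn_const, zipWith_add_zero]

lemma G2_zero (r : ℕ) (K : Fin r → ℕ) (hK : ∀ i, 1 ≤ K i) (s : ℕ) :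
    G2 r K s 0 = zp (List.ofFn K ++ List.replicate s 1) := by
  unfold G2
  rw [Nat.add_zero, compFinset_self, Finset.sum_singleton]
  have hfam : (fun i : Fin r => compFinset 1 (K i + 1 - 1))
      = fun i => ({fun _ : Fin 1 => K i} : Finset (Fin 1 → ℕ)) := by
    funext i
    rw [Nat.add_sub_cancel]
    exact compFinset_one (hK i)
  rw [hfam, piFinset_single, Finset.sum_singleton]
  congr 1
  congr 1
  have h1 : (fun i : Fin r => List.ofFn fun _ : Fin 1 => K i) = fun i => [K i] :=
    funext fun i => by simp
  rw [h1, flatten_ofFn_singleton]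

lemma H2_zero (r : ℕ) (K : Fin (r+1) → ℕ) (s : ℕ) :
    H2 r K s 0 = zp (List.ofFn K ++ List.replicate s 1) := by
  unfold H2
  rw [Finset.sum_range_one, Nat.sub_self, weakComp_zero, Finset.sum_singleton, S2_zero]
  congr 1
  unfold base2
  have h1 : (fun i : Fin r => K i.castSucc :: List.replicate ((fun _ : Fin r => 0) i) 1)
      = fun i => [K i.castSucc] := funext fun i => by simp
  rw [h1, flatten_ofFn_singleton, List.ofFn_succ' K, List.concat_eq_append]

lemma F_zero (k : List ℕ) (hk : k ≠ []) (hp : ∀ x ∈ k, 1 ≤ x) (s : ℕ) : Ffun k s 0 = 0 := by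
  obtain ⟨d, hd⟩ : ∃ d, k.length = d + 1 :=
    ⟨k.length - 1, (Nat.succ_pred_eq_of_pos (List.length_pos_iff.mpr hk)).symm⟩
  have hG : Gfun k s 0 = G2 (d+1) (fun i : Fin (d+1) => k.get (Fin.cast hd.symm i)) s 0 := by
    rw [Gfun_eq_G2]
    exact G2_congr hd (fun i => congrArg k.get (Fin.ext rfl)) s 0
  have hH : Hfun k s 0 = H2 d (fun i : Fin (d+1) => k.get (Fin.cast hd.symm i)) s 0 := by
    rw [Hfun_eq_H2 k hk]
    exact H2_congr (by omega) (fun i => congrArg k.get (Fin.ext rfl)) s 0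
  unfold Ffun
  rw [hG, hH, G2_zero (d+1) _ (fun i => hp _ (List.get_mem k _)), H2_zero d _, sub_self]

/-! ### The recursion for F -/

lemma F_rec (k : List ℕ) (hk : k ≠ []) (s t : ℕ) :
    Ffun (k ++ [1]) s t = ∑ u ∈ Finset.range (t+1), Ffun k (s + (t - u) + 1) u := by
  obtain ⟨d, hd⟩ : ∃ d, k.length = d + 1 :=
    ⟨k.length - 1, (Nat.succ_pred_eq_of_pos (List.length_pos_iff.mpr hk)).symm⟩
  set K : Fin (d+1) → ℕ := fun i => k.get (Fin.cast hd.symm i) with hKdef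
  have hlen : (k ++ [1]).length = (d+1) + 1 := by simp [hd]
  have hget : ∀ i : Fin (k ++ [1]).length,
      (k ++ [1]).get i = (Fin.snoc K 1 : Fin ((d+1)+1) → ℕ) (Fin.cast hlen i) := by
    intro i
    have hi : i.val < k.length + 1 := by
      have := i.isLt
      simpa using this
    by_cases hlt : i.val < k.length
    · have h1 : (k ++ [1]).get i = k.get ⟨i.val, hlt⟩ := by
        rw [List.get_eq_getElem, List.get_eq_getElem]
        exact List.getElem_append_left hlt
      have h2 : Fin.cast hlen i = Fin.castSucc ⟨i.val, by omega⟩ := Fin.ext rfl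
      rw [h1, h2, Fin.snoc_castSucc]
      simp only [hKdef]
      exact congrArg k.get (Fin.ext rfl)
    · have hv : i.val = k.length := by omega
      have h2 : Fin.cast hlen i = Fin.last (d+1) := Fin.ext (by simp [hv, hd])
      rw [h2, Fin.snoc_last, List.get_eq_getElem]
      have h3 : (k ++ [1])[i.val] = [1][i.val - k.length]'(by simp [hv]) :=
        List.getElem_append_right (by omega)
      rw [h3]
      simp [hv]
  have hG1 : Gfun (k ++ [1]) s t = G2 ((d+1)+1) (Fin.snoc K 1) s t := by
    rw [Gfun_eq_G2]
    exact G2_congr hlen (fun i => hget i) s t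
  have hGk : ∀ s' t', Gfun k s' t' = G2 (d+1) K s' t' := fun s' t' => by
    rw [Gfun_eq_G2]
    refine G2_congr hd (fun i => ?_) s' t'
    simp only [hKdef]
    exact congrArg k.get (Fin.ext rfl)
  have hH1 : Hfun (k ++ [1]) s t = H2 (d+1) (Fin.snoc K 1) s t := by
    rw [Hfun_eq_H2 (k ++ [1]) (by simp)]
    have e1 : (k ++ [1]).length - 1 + 1 = (k ++ [1]).length :=
      Nat.succ_pred_eq_of_pos (List.length_pos_iff.mpr (by simp))
    refine H2_congr (by simp [hd]) (fun i => ?_) s t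
    refine Eq.trans (hget (Fin.cast e1 i))
      (congrArg (Fin.snoc K 1 : Fin ((d+1)+1) → ℕ) (Fin.ext rfl))
  have hHk : ∀ s' t', Hfun k s' t' = H2 d K s' t' := fun s' t' => by
    rw [Hfun_eq_H2 k hk]
    refine H2_congr (by omega) (fun i => ?_) s' t'
    simp only [hKdef]
    exact congrArg k.get (Fin.ext rfl)
  unfold Ffun
  rw [hG1, hH1, G2_rec (d+1) K s t, H2_rec d K s t, ← Finset.sum_sub_distrib]
  refine Finset.sum_congr rfl (fun u _ => ?_)
  rw [hGk (s + (t-u) + 1) u, hHk (s + (t-u) + 1) u]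

/-- Theorem A (the s = 0 case, for all indices) implies Theorem B (all s). -/
theorem thmA_implies_thmB
    (hA : ∀ k : List ℕ, k ≠ [] → (∀ x ∈ k, 1 ≤ x) → ∀ t : ℕ, Ffun k 0 t = 0) :
    ∀ k : List ℕ, k ≠ [] → (∀ x ∈ k, 1 ≤ x) → ∀ s t : ℕ, Ffun k s t = 0 := by
  have main : ∀ s : ℕ, ∀ k : List ℕ, k ≠ [] → (∀ x ∈ k, 1 ≤ x) → ∀ t : ℕ, Ffun k s t = 0 := by
    intro s
    induction s with
    | zero => exact hA
    | succ s ih =>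
      have inner : ∀ t : ℕ, ∀ k : List ℕ, k ≠ [] → (∀ x ∈ k, 1 ≤ x) → Ffun k (s+1) t = 0 := by
        intro t
        induction t with
        | zero => intro k hk hp; exact F_zero k hk hp (s+1)
        | succ t iht =>
          intro k hk hp
          have hk' : (k ++ [1] : List ℕ) ≠ [] := by simp
          have hp' : ∀ x ∈ k ++ [1], 1 ≤ x := by
            intro x hx
            rw [List.mem_append] at hx
            rcases hx with h | h
            · exact hp x h
            · simp at h; omega
          have h1 := F_rec k hk s (t+1)
          have h2 := F_rec k hk (s+1) t
          rw [ih (k ++ [1]) hk' hp' (t+1)] at h1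
          rw [iht (k ++ [1]) hk' hp'] at h2
          rw [Finset.sum_range_succ] at h1
          have hsum : ∑ u ∈ Finset.range (t+1), Ffun k (s + (t+1-u) + 1) u
              = ∑ u ∈ Finset.range (t+1), Ffun k (s+1 + (t-u) + 1) u := by
            refine Finset.sum_congr rfl (fun u hu => ?_)
            simp only [Finset.mem_range] at hu
            rw [show s + (t+1-u) + 1 = s+1 + (t-u) + 1 by omega]
          rw [hsum] at h1
          rw [show s + (t+1-(t+1)) + 1 = s + 1 by omega] at h1
          rw [← h2] at h1
          linarith
      intro k hk hp t
      exact inner t k hk hp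
  intro k hk hp s t
  exact main s k hk hp t
end

section
/- The harmonic product * on formal linear combinations of indices is associative: (k*l)*m = k*(l*m) for all indices k, l, m. -/
set_option maxHeartbeats 1000000

/-- The harmonic (stuffle) product of two indices, as a formal ℤ-linear
combination of indices. -/
noncomputable def hmul : List ℕ → List ℕ → (List ℕ →₀ ℤ)
  | [], l => Finsupp.single l 1
  | k, [] => Finsupp.single k 1
  | a :: k, b :: l =>
      (hmul k (b :: l)).mapDomain (a :: ·) +
      (hmul (a :: k) l).mapDomain (b :: ·) +
      (hmul k l).mapDomain ((a + b) :: ·)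
termination_by k l => k.length + l.length

/-- Bilinear extension of the harmonic product to formal ℤ-linear combinations. -/
noncomputable def hmulExt (x y : List ℕ →₀ ℤ) : List ℕ →₀ ℤ :=
  x.sum fun k ck => y.sum fun l cl => (ck * cl) • hmul k l

lemma hmul_nil (k : List ℕ) : hmul k [] = Finsupp.single k 1 := by
  cases k
  · rw [hmul]
  · rw [hmul]; simp

lemma hmul_nil' (l : List ℕ) : hmul [] l = Finsupp.single l 1 := by rw [hmul]

noncomputable def A (x : List ℕ →₀ ℤ) (m : List ℕ) : List ℕ →₀ ℤ :=
  x.sum fun n c => c • hmul n m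

noncomputable def B (k : List ℕ) (y : List ℕ →₀ ℤ) : List ℕ →₀ ℤ :=
  y.sum fun n c => c • hmul k n

lemma A_single (n : List ℕ) (c : ℤ) (m : List ℕ) : A (Finsupp.single n c) m = c • hmul n m := by
  simp [A, Finsupp.sum_single_index]

lemma B_single (k n : List ℕ) (c : ℤ) : B k (Finsupp.single n c) = c • hmul k n := by
  simp [B, Finsupp.sum_single_index]

lemma A_add (x y : List ℕ →₀ ℤ) (m : List ℕ) : A (x + y) m = A x m + A y m := by
  simp [A, Finsupp.sum_add_index', add_smul]

lemma B_add (k : List ℕ) (x y : List ℕ →₀ ℤ) : B k (x + y) = B k x + B k y := by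
  simp [B, Finsupp.sum_add_index', add_smul]

lemma A_mapDomain (f : List ℕ → List ℕ) (x : List ℕ →₀ ℤ) (m : List ℕ) :
    A (x.mapDomain f) m = x.sum fun n c => c • hmul (f n) m := by
  unfold A
  exact Finsupp.sum_mapDomain_index (by simp) (by intros; rw [add_smul])

lemma B_mapDomain (k : List ℕ) (f : List ℕ → List ℕ) (y : List ℕ →₀ ℤ) :
    B k (y.mapDomain f) = y.sum fun n c => c • hmul k (f n) := by
  unfold B
  exact Finsupp.sum_mapDomain_index (by simp) (by intros; rw [add_smul])

lemma A_cons (a : ℕ) (x : List ℕ →₀ ℤ) (c : ℕ) (m : List ℕ) :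
    A (x.mapDomain (a :: ·)) (c :: m) =
      (A x (c :: m)).mapDomain (a :: ·) +
      (A (x.mapDomain (a :: ·)) m).mapDomain (c :: ·) +
      (A x m).mapDomain ((a + c) :: ·) := by
  rw [A_mapDomain (a :: ·) x (c :: m), A_mapDomain (a :: ·) x m]
  simp only [A, Finsupp.mapDomain_sum]
  rw [← Finsupp.sum_add, ← Finsupp.sum_add]
  apply Finsupp.sum_congr
  intro n _
  rw [hmul]
  simp [Finsupp.mapDomain_add, Finsupp.mapDomain_smul, smul_add]

lemma B_cons (a : ℕ) (k : List ℕ) (c : ℕ) (y : List ℕ →₀ ℤ) :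
    B (a :: k) (y.mapDomain (c :: ·)) =
      (B k (y.mapDomain (c :: ·))).mapDomain (a :: ·) +
      (B (a :: k) y).mapDomain (c :: ·) +
      (B k y).mapDomain ((a + c) :: ·) := by
  rw [B_mapDomain (a :: k) (c :: ·) y, B_mapDomain k (c :: ·) y]
  simp only [B, Finsupp.mapDomain_sum]
  rw [← Finsupp.sum_add, ← Finsupp.sum_add]
  apply Finsupp.sum_congr
  intro n _
  rw [hmul]
  simp [Finsupp.mapDomain_add, Finsupp.mapDomain_smul, smul_add]

lemma A_hmul_cons (a b c : ℕ) (k l m : List ℕ) :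
    A (hmul (a :: k) (b :: l)) (c :: m) =
      (A (hmul k (b :: l)) (c :: m)).mapDomain (a :: ·) +
      (A (hmul (a :: k) l) (c :: m)).mapDomain (b :: ·) +
      (A (hmul k l) (c :: m)).mapDomain ((a + b) :: ·) +
      (A (hmul (a :: k) (b :: l)) m).mapDomain (c :: ·) +
      (A (hmul k (b :: l)) m).mapDomain ((a + c) :: ·) +
      (A (hmul (a :: k) l) m).mapDomain ((b + c) :: ·) +
      (A (hmul k l) m).mapDomain ((a + b + c) :: ·) := by
  conv_lhs => rw [hmul]
  rw [A_add, A_add, A_cons, A_cons, A_cons]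
  conv_rhs => rw [hmul]
  rw [A_add, A_add, Finsupp.mapDomain_add, Finsupp.mapDomain_add]
  abel

lemma B_hmul_cons (a b c : ℕ) (k l m : List ℕ) :
    B (a :: k) (hmul (b :: l) (c :: m)) =
      (B k (hmul (b :: l) (c :: m))).mapDomain (a :: ·) +
      (B (a :: k) (hmul l (c :: m))).mapDomain (b :: ·) +
      (B k (hmul l (c :: m))).mapDomain ((a + b) :: ·) +
      (B (a :: k) (hmul (b :: l) m)).mapDomain (c :: ·) +
      (B k (hmul (b :: l) m)).mapDomain ((a + c) :: ·) +
      (B (a :: k) (hmul l m)).mapDomain ((b + c) :: ·) +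
      (B k (hmul l m)).mapDomain ((a + b + c) :: ·) := by
  conv_lhs => rw [hmul]
  rw [B_add, B_add, B_cons, B_cons, B_cons]
  conv_rhs => rw [hmul]
  rw [B_add, B_add, Finsupp.mapDomain_add, Finsupp.mapDomain_add]
  abel

lemma key : ∀ k l m : List ℕ, A (hmul k l) m = B k (hmul l m)
  | [], l, m => by
      rw [hmul_nil', A_single, one_smul, B]
      conv_lhs => rw [← Finsupp.sum_single (hmul l m)]
      apply Finsupp.sum_congr
      intro n _
      rw [hmul_nil']
      simp
  | a :: k, [], m => by
      rw [hmul_nil, A_single, one_smul, hmul_nil', B_single, one_smul]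
  | a :: k, b :: l, [] => by
      rw [hmul_nil, B_single, one_smul, A]
      conv_rhs => rw [← Finsupp.sum_single (hmul (a :: k) (b :: l))]
      apply Finsupp.sum_congr
      intro n _
      rw [hmul_nil]
      simp
  | a :: k, b :: l, c :: m => by
      rw [A_hmul_cons, B_hmul_cons,
        key k (b :: l) (c :: m), key (a :: k) l (c :: m), key k l (c :: m),
        key (a :: k) (b :: l) m, key k (b :: l) m, key (a :: k) l m, key k l m]
termination_by k l m => k.length + l.length + m.length

/-- The harmonic product is associative. -/
theorem hmul_assoc (k l m : List ℕ) :
    hmulExt (hmul k l) (Finsupp.single m 1) = hmulExt (Finsupp.single k 1) (hmul l m) := by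
  have h1 : hmulExt (hmul k l) (Finsupp.single m 1) = A (hmul k l) m := by
    unfold hmulExt A
    apply Finsupp.sum_congr
    intro n _
    rw [Finsupp.sum_single_index (by simp)]
    simp
  have h2 : hmulExt (Finsupp.single k 1) (hmul l m) = B k (hmul l m) := by
    unfold hmulExt B
    rw [Finsupp.sum_single_index (by simp)]
    simp
  rw [h1, h2, key]
end

section
/- Stuffle identity for truncated sums: for any indices k = (k₁,…,k_r) and l = (l₁,…,l_s) of positive integers and any N ≥ 1, ζ_N(k)·ζ_N(l) = ζ_N(k*l), where ζ_N(k₁,…,k_r) := ∑_{N≥n₁>⋯>n_r≥1} ∏ n_i^{-k_i}, ζ_N is extended linearly to formal sums of indices, and * is the harmonic product. -/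
/-- Truncated MZV: ∑_{N≥n₁>⋯>n_r≥1} ∏ nᵢ^{-kᵢ} ∈ ℚ. -/
def zetaN (N : ℕ) (k : List ℕ) : ℚ :=
  ∑ n ∈ (Finset.univ : Finset (Fin k.length → Fin (N + 1))).filter
      (fun n => (∀ i j : Fin k.length, i < j → (n j : ℕ) < (n i : ℕ)) ∧
        ∀ i, 1 ≤ (n i : ℕ)),
    ∏ i, ((n i : ℚ) ^ k.get i)⁻¹

/-- Linear extension of the truncated MZV to formal ℤ-linear combinations. -/
def zetaNExt (N : ℕ) (x : List ℕ →₀ ℤ) : ℚ :=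
  x.sum fun c coef => (coef : ℚ) * zetaN N c

def Z : ℕ → List ℕ → ℚ
  | _, [] => 1
  | M, a :: k => ∑ n ∈ Finset.Icc 1 M, ((n : ℚ) ^ a)⁻¹ * Z (n - 1) k

def ZExt (M : ℕ) (x : List ℕ →₀ ℤ) : ℚ := x.sum fun c coef => (coef : ℚ) * Z M c

lemma ZExt_add (M : ℕ) (x y : List ℕ →₀ ℤ) : ZExt M (x + y) = ZExt M x + ZExt M y := by
  unfold ZExt
  apply Finsupp.sum_add_index' <;> intros <;> push_cast <;> ring

lemma ZExt_single (M : ℕ) (k : List ℕ) : ZExt M (Finsupp.single k 1) = Z M k := by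
  simp [ZExt, Finsupp.sum_single_index]

lemma cons_inj (a : ℕ) : Function.Injective (fun c : List ℕ => a :: c) := by
  intro x y h; simpa using h

lemma ZExt_mapDomain (M a : ℕ) (x : List ℕ →₀ ℤ) :
    ZExt M (Finsupp.mapDomain (a :: ·) x) =
      ∑ n ∈ Finset.Icc 1 M, ((n : ℚ) ^ a)⁻¹ * ZExt (n - 1) x := by
  rw [ZExt, Finsupp.sum_mapDomain_index_inj (cons_inj a)]
  rw [Finsupp.sum]
  simp only [Z, Finset.mul_sum]
  rw [Finset.sum_comm]
  simp [ZExt, Finsupp.sum, Finset.mul_sum]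
  congr 1; ext n; congr 1; ext c; ring

lemma split_three (s : Finset ℕ) (f : ℕ → ℚ) (m : ℕ) (hm : m ∈ s) :
    ∑ n ∈ s, f n = (∑ n ∈ s.filter (· < m), f n) + ((∑ n ∈ s.filter (m < ·), f n) + f m) := by
  rw [← Finset.sum_filter_add_sum_filter_not s (· < m)]
  congr 1
  rw [← Finset.sum_filter_add_sum_filter_not (s.filter (¬ · < m)) (m < ·)]
  congr 1
  · rw [Finset.filter_filter]
    apply Finset.sum_congr _ (fun _ _ => rfl)
    apply Finset.filter_congr; intro x _; simp; omega
  · have : (s.filter (¬ · < m)).filter (¬ m < ·) = {m} := by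
      rw [Finset.filter_filter]
      ext x; simp; constructor
      · rintro ⟨_, h1, h2⟩; omega
      · rintro rfl; exact ⟨hm, by omega, by omega⟩
    rw [this, Finset.sum_singleton]

lemma sum_lt_comm (s : Finset ℕ) (F : ℕ → ℕ → ℚ) :
    ∑ m ∈ s, ∑ n ∈ s.filter (m < ·), F m n = ∑ n ∈ s, ∑ m ∈ s.filter (· < n), F m n := by
  simp only [Finset.sum_filter]
  exact Finset.sum_comm

lemma Icc_filter_lt (M m : ℕ) (hm : m ∈ Finset.Icc 1 M) :
    (Finset.Icc 1 M).filter (· < m) = Finset.Icc 1 (m - 1) := by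
  simp at hm; ext x; simp; omega

lemma Z_mul (k l : List ℕ) : ∀ M, Z M k * Z M l = ZExt M (hmul k l) := by
  induction k, l using hmul.induct with
  | case1 l =>
      intro M; rw [hmul, ZExt_single]
      show 1 * Z M l = Z M l
      rw [one_mul]
  | case2 k h =>
      intro M
      match k with
      | [] => exact absurd rfl h
      | a :: k =>
        rw [hmul, ZExt_single]
        · show Z M (a :: k) * 1 = Z M (a :: k); rw [mul_one]
        · simp
  | case3 a k b l ih1 ih2 ih3 =>
      intro M
      have expand : Z M (a :: k) * Z M (b :: l)
          = Finset.sum (Finset.Icc 1 M) fun (m : ℕ) => Finset.sum (Finset.Icc 1 M) fun (n : ℕ) =>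
              ((m : ℚ) ^ a)⁻¹ * Z (m - 1) k * (((n : ℚ) ^ b)⁻¹ * Z (n - 1) l) := by
        show (Finset.sum (Finset.Icc 1 M) fun (m : ℕ) => ((m : ℚ) ^ a)⁻¹ * Z (m - 1) k) *
             (Finset.sum (Finset.Icc 1 M) fun (n : ℕ) => ((n : ℚ) ^ b)⁻¹ * Z (n - 1) l) = _
        rw [Finset.sum_mul_sum]
      have T1 : (Finset.sum (Finset.Icc 1 M) fun (m : ℕ) =>
            Finset.sum ((Finset.Icc 1 M).filter (· < m)) fun (n : ℕ) =>
              ((m : ℚ) ^ a)⁻¹ * Z (m - 1) k * (((n : ℚ) ^ b)⁻¹ * Z (n - 1) l))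
          = ZExt M (Finsupp.mapDomain (a :: ·) (hmul k (b :: l))) := by
        rw [ZExt_mapDomain]
        apply Finset.sum_congr rfl
        intro m hm
        rw [Icc_filter_lt M m hm, ← ih1 (m - 1)]
        show _ = ((m:ℚ)^a)⁻¹ * (Z (m-1) k *
          Finset.sum (Finset.Icc 1 (m-1)) fun (n : ℕ) => ((n : ℚ) ^ b)⁻¹ * Z (n - 1) l)
        rw [Finset.mul_sum, Finset.mul_sum]
        apply Finset.sum_congr rfl
        intro n _; ring
      have T2 : (Finset.sum (Finset.Icc 1 M) fun (m : ℕ) =>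
            Finset.sum ((Finset.Icc 1 M).filter (m < ·)) fun (n : ℕ) =>
              ((m : ℚ) ^ a)⁻¹ * Z (m - 1) k * (((n : ℚ) ^ b)⁻¹ * Z (n - 1) l))
          = ZExt M (Finsupp.mapDomain (b :: ·) (hmul (a :: k) l)) := by
        rw [sum_lt_comm, ZExt_mapDomain]
        apply Finset.sum_congr rfl
        intro n hn
        rw [Icc_filter_lt M n hn, ← ih2 (n - 1)]
        show _ = ((n:ℚ)^b)⁻¹ * ((Finset.sum (Finset.Icc 1 (n-1)) fun (m : ℕ) =>
          ((m : ℚ) ^ a)⁻¹ * Z (m - 1) k) * Z (n-1) l)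
        rw [Finset.sum_mul, Finset.mul_sum]
        apply Finset.sum_congr rfl
        intro m _; ring
      have T3 : (Finset.sum (Finset.Icc 1 M) fun (m : ℕ) =>
              ((m : ℚ) ^ a)⁻¹ * Z (m - 1) k * (((m : ℚ) ^ b)⁻¹ * Z (m - 1) l))
          = ZExt M (Finsupp.mapDomain ((a + b) :: ·) (hmul k l)) := by
        rw [ZExt_mapDomain]
        apply Finset.sum_congr rfl
        intro m _
        rw [← ih3 (m - 1), pow_add, mul_inv]
        ring
      calc Z M (a :: k) * Z M (b :: l)
          = Finset.sum (Finset.Icc 1 M) fun (m : ℕ) => Finset.sum (Finset.Icc 1 M) fun (n : ℕ) =>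
              ((m : ℚ) ^ a)⁻¹ * Z (m - 1) k * (((n : ℚ) ^ b)⁻¹ * Z (n - 1) l) := expand
        _ = Finset.sum (Finset.Icc 1 M) fun (m : ℕ) =>
              ((Finset.sum ((Finset.Icc 1 M).filter (· < m)) fun (n : ℕ) =>
                ((m : ℚ) ^ a)⁻¹ * Z (m - 1) k * (((n : ℚ) ^ b)⁻¹ * Z (n - 1) l)) +
              ((Finset.sum ((Finset.Icc 1 M).filter (m < ·)) fun (n : ℕ) =>
                ((m : ℚ) ^ a)⁻¹ * Z (m - 1) k * (((n : ℚ) ^ b)⁻¹ * Z (n - 1) l)) +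
                ((m : ℚ) ^ a)⁻¹ * Z (m - 1) k * (((m : ℚ) ^ b)⁻¹ * Z (m - 1) l))) :=
            Finset.sum_congr rfl (fun m hm => split_three (Finset.Icc 1 M)
              (fun n => ((m : ℚ) ^ a)⁻¹ * Z (m - 1) k * (((n : ℚ) ^ b)⁻¹ * Z (n - 1) l)) m hm)
        _ = (Finset.sum (Finset.Icc 1 M) fun (m : ℕ) =>
              Finset.sum ((Finset.Icc 1 M).filter (· < m)) fun (n : ℕ) =>
                ((m : ℚ) ^ a)⁻¹ * Z (m - 1) k * (((n : ℚ) ^ b)⁻¹ * Z (n - 1) l)) +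
            ((Finset.sum (Finset.Icc 1 M) fun (m : ℕ) =>
              Finset.sum ((Finset.Icc 1 M).filter (m < ·)) fun (n : ℕ) =>
                ((m : ℚ) ^ a)⁻¹ * Z (m - 1) k * (((n : ℚ) ^ b)⁻¹ * Z (n - 1) l)) +
            (Finset.sum (Finset.Icc 1 M) fun (m : ℕ) =>
              ((m : ℚ) ^ a)⁻¹ * Z (m - 1) k * (((m : ℚ) ^ b)⁻¹ * Z (m - 1) l))) := by
            rw [Finset.sum_add_distrib, Finset.sum_add_distrib]
        _ = ZExt M (Finsupp.mapDomain (a :: ·) (hmul k (b :: l))) +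
            (ZExt M (Finsupp.mapDomain (b :: ·) (hmul (a :: k) l)) +
             ZExt M (Finsupp.mapDomain ((a + b) :: ·) (hmul k l))) := by rw [T1, T2, T3]
        _ = ZExt M (hmul (a :: k) (b :: l)) := by rw [hmul, ZExt_add, ZExt_add]; ring

def DS (M r : ℕ) : Finset (Fin r → ℕ) :=
  (Fintype.piFinset fun _ : Fin r => Finset.Icc 1 M).filter
    (fun n => ∀ i j : Fin r, i < j → n j < n i)

def W (M : ℕ) (k : List ℕ) : ℚ := ∑ n ∈ DS M k.length, ∏ i, ((n i : ℚ) ^ k.get i)⁻¹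

lemma mem_DS {M r : ℕ} {n : Fin r → ℕ} :
    n ∈ DS M r ↔ (∀ i, n i ∈ Finset.Icc 1 M) ∧ ∀ i j : Fin r, i < j → n j < n i := by
  simp [DS, Fintype.mem_piFinset]

lemma zetaN_eq_W (N : ℕ) (k : List ℕ) : zetaN N k = W N k := by
  unfold zetaN W
  refine Finset.sum_bij' (fun n _ => fun i => (n i : ℕ))
    (fun m hm => fun i => ⟨m i, ?_⟩) ?_ ?_ ?_ ?_ ?_
  · have := (mem_DS.mp hm).1 i
    simp at this
    omega
  · intro n hn
    simp only [Finset.mem_filter, Finset.mem_univ, true_and] at hn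
    rw [mem_DS]
    refine ⟨fun i => ?_, hn.1⟩
    simp [hn.2 i, Nat.lt_succ_iff.mp (n i).isLt]
  · intro m hm
    simp only [Finset.mem_filter, Finset.mem_univ, true_and]
    obtain ⟨h1, h2⟩ := mem_DS.mp hm
    exact ⟨h2, fun i => by have := h1 i; simp at this; simpa using this.1⟩
  · intro n hn; rfl
  · intro m hm; rfl
  · intro n hn; rfl

lemma W_nil (M : ℕ) : W M [] = 1 := by
  simp [W, DS]


lemma DS_sum_succ (M r : ℕ) (f : ℕ → ℚ) (g : Fin r → ℕ → ℚ) :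
    ∑ n ∈ DS M (r + 1), (f (n 0) * ∏ i, g i (n i.succ))
      = ∑ m ∈ Finset.Icc 1 M, f m * ∑ p ∈ DS (m - 1) r, ∏ i, g i (p i) := by
  simp only [Finset.mul_sum]
  rw [← Finset.sum_sigma (Finset.Icc 1 M) (fun m => DS (m - 1) r)
        (fun p => f p.1 * ∏ i, g i (p.2 i))]
  refine Finset.sum_bij' (fun n _ => ⟨n 0, Fin.tail n⟩)
    (fun p _ => Fin.cons p.1 p.2) ?_ ?_ ?_ ?_ ?_
  · intro n hn
    obtain ⟨h1, h2⟩ := mem_DS.mp hn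
    rw [Finset.mem_sigma]
    refine ⟨h1 0, mem_DS.mpr ⟨fun i => ?_, fun i j hij => ?_⟩⟩
    · have hb := h1 i.succ
      have hlt : n i.succ < n 0 := h2 0 i.succ (Fin.succ_pos i)
      have h0 := h1 0
      simp only [Finset.mem_Icc] at *
      unfold Fin.tail
      omega
    · exact h2 i.succ j.succ (Fin.succ_lt_succ_iff.mpr hij)
  · rintro ⟨m, p⟩ hp
    rw [Finset.mem_sigma] at hp
    obtain ⟨hm, hp⟩ := hp
    obtain ⟨h1, h2⟩ := mem_DS.mp hp
    dsimp only at h1 h2 hm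
    simp only [Finset.mem_Icc] at hm
    refine mem_DS.mpr ⟨fun i => ?_, fun i j hij => ?_⟩ <;> beta_reduce
    · rcases Fin.eq_zero_or_eq_succ i with rfl | ⟨i', rfl⟩
      · simpa [Finset.mem_Icc] using hm
      · have := h1 i'
        simp only [Finset.mem_Icc, Fin.cons_succ] at *
        omega
    · have hj : j ≠ 0 := Fin.pos_iff_ne_zero.mp (lt_of_le_of_lt (Fin.zero_le i) hij)
      obtain ⟨j', rfl⟩ := Fin.eq_succ_of_ne_zero hj
      rw [Fin.cons_succ]
      rcases Fin.eq_zero_or_eq_succ i with rfl | ⟨i', rfl⟩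
      · rw [Fin.cons_zero]
        have := h1 j'
        simp only [Finset.mem_Icc] at this
        dsimp only
        omega
      · rw [Fin.cons_succ]
        exact h2 i' j' (Fin.succ_lt_succ_iff.mp hij)
  · intro n _; exact Fin.cons_self_tail n
  · rintro ⟨m, p⟩ _; simp [Fin.tail_cons]
  · intro n _; rfl

lemma W_cons (M a : ℕ) (k : List ℕ) :
    W M (a :: k) = ∑ m ∈ Finset.Icc 1 M, ((m : ℚ) ^ a)⁻¹ * W (m - 1) k := by
  have e1 : W M (a :: k) = ∑ n ∈ DS M (k.length + 1),
      (((n 0 : ℕ) : ℚ) ^ a)⁻¹ * ∏ i : Fin k.length, (((n i.succ : ℕ) : ℚ) ^ k.get i)⁻¹ := by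
    unfold W
    show ∑ n ∈ DS M (k.length + 1), ∏ i : Fin (k.length + 1), ((n i : ℚ) ^ ((a :: k).get i))⁻¹ = _
    refine Finset.sum_congr rfl fun n _ => ?_
    rw [Fin.prod_univ_succ]
    rfl
  rw [e1, DS_sum_succ M k.length (fun x => ((x : ℚ) ^ a)⁻¹)
        (fun i x => ((x : ℚ) ^ k.get i)⁻¹)]
  rfl

lemma W_eq_Z' (k : List ℕ) (M : ℕ) (Z : ℕ → List ℕ → ℚ)
    (h1 : ∀ M, Z M [] = 1)
    (h2 : ∀ M a k, Z M (a :: k) = ∑ n ∈ Finset.Icc 1 M, ((n : ℚ) ^ a)⁻¹ * Z (n - 1) k) :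
    W M k = Z M k := by
  induction k generalizing M with
  | nil => rw [W_nil, h1]
  | cons a k ih => rw [W_cons, h2]; exact Finset.sum_congr rfl fun n _ => by rw [ih]

lemma zetaN_eq_Z (N : ℕ) (k : List ℕ) : zetaN N k = Z N k := by
  rw [zetaN_eq_W]
  exact W_eq_Z' k N Z (fun _ => rfl) (fun _ _ _ => rfl)

lemma zetaNExt_eq_ZExt (N : ℕ) (x : List ℕ →₀ ℤ) : zetaNExt N x = ZExt N x := by
  unfold zetaNExt ZExt
  exact Finsupp.sum_congr fun c _ => by rw [zetaN_eq_Z]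

/-- Stuffle identity for truncated multiple harmonic sums. -/
theorem zetaN_stuffle (k l : List ℕ) (N : ℕ) (hN : 1 ≤ N) :
    zetaN N k * zetaN N l = zetaNExt N (hmul k l) := by
  rw [zetaN_eq_Z, zetaN_eq_Z, zetaNExt_eq_ZExt]
  exact Z_mul k l N
end
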